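/- Let p be a prime with p ≡ 1 (mod 8), write p = r^2 + 2s^2 with s = 2^j·u for u odd. Then the Legendre symbol (s/p) equals 1. -/

import Mathlib

/-- For a prime p ≡ 1 (mod 8) written as p = r² + 2s², the Legendre symbol
(s/p) equals 1. -/
theorem stmt_8 (p : ℕ) [Fact p.Prime] (hp8 : p % 8 = 1) (r s : ℤ)
    (h : (p : ℤ) = r ^ 2 + 2 * s ^ 2) :
    legendreSym p s = 1 := by
  have hp : p.Prime := Fact.out
  have hp4 : p % 4 = 1 := by omega
  have hp2 : p % 2 = 1 := by omega
  have hpodd : Odd p := Nat.odd_iff.mpr hp2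
  -- s ≠ 0
  have hs0 : s ≠ 0 := by
    rintro rfl
    have h1 : (p : ℤ) = r ^ 2 := by linarith
    have hr : p = r.natAbs ^ 2 := by
      have := congrArg Int.natAbs h1
      simpa [Int.natAbs_pow] using this
    have h2 := hp.two_le
    have hdvd : r.natAbs ∣ p := ⟨r.natAbs, by rw [hr]; ring⟩
    rcases hp.eq_one_or_self_of_dvd _ hdvd with h3 | h3 <;> nlinarith
  set n := s.natAbs with hn
  have hn0 : n ≠ 0 := Int.natAbs_ne_zero.mpr hs0
  have hn1 : 1 ≤ n := Nat.one_le_iff_ne_zero.mpr hn0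
  have hsn : s ^ 2 = (n : ℤ) ^ 2 := by rw [hn, ← Int.abs_eq_natAbs, sq_abs]
  -- reduce to natAbs
  have habs : legendreSym p s = jacobiSym (n : ℤ) p := by
    rw [jacobiSym.legendreSym.to_jacobiSym]
    rcases Int.natAbs_eq s with he | he
    · rw [← he]
    · rw [he, jacobiSym.neg _ hpodd]
      have hχ : ZMod.χ₄ p = 1 := by
        rw [ZMod.χ₄_nat_mod_four, hp4]; decide
      rw [hχ, one_mul]
  rw [habs]
  set j := n.factorization 2 with hj
  set u := ordCompl[2] n with hu
  have hfact : 2 ^ j * u = n := Nat.ordProj_mul_ordCompl_eq_self n 2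
  have huodd : Odd u := Nat.odd_iff.mpr (Nat.two_dvd_ne_zero.mp
    (Nat.not_dvd_ordCompl Nat.prime_two hn0))
  have hu0 : u ≠ 0 := (Nat.ordCompl_pos 2 hn0).ne'
  have hun : u ∣ n := Nat.ordCompl_dvd n 2
  have hudvd : (u : ℤ) ∣ s := dvd_trans (Int.natCast_dvd_natCast.mpr hun) (Int.natAbs_dvd.mpr dvd_rfl)
  -- J(2|p) = 1
  have h2 : jacobiSym 2 p = 1 := by
    rw [jacobiSym.at_two hpodd, ZMod.χ₈_nat_eq_if_mod_eight, hp2, hp8]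
    norm_num
  -- coprimality of r and u
  have hcop : r.gcd (u : ℤ) = 1 := by
    by_contra hg
    obtain ⟨q, hq, hqdvd⟩ := Nat.exists_prime_and_dvd hg
    have hqr : (q : ℤ) ∣ r := Int.dvd_natAbs.mp (Int.natCast_dvd_natCast.mpr
      (hqdvd.trans (Nat.gcd_dvd_left _ _)))
    have hqu : q ∣ u := hqdvd.trans (by exact Nat.gcd_dvd_right r.natAbs u)
    have hqs : (q : ℤ) ∣ s := (Int.natCast_dvd_natCast.mpr hqu).trans hudvd
    have hqp : q ∣ p := by
      have : (q : ℤ) ∣ (p : ℤ) := by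
        rw [h]
        exact dvd_add (dvd_pow hqr two_ne_zero) ((dvd_pow hqs two_ne_zero).mul_left 2)
      exact_mod_cast Int.natCast_dvd_natCast.mp this
    have hqeq : q = p := ((hp.eq_one_or_self_of_dvd q hqp).resolve_left hq.one_lt.ne').symm ▸ rfl
    have hq_le : q ≤ n := (Nat.le_of_dvd (Nat.pos_of_ne_zero hu0) hqu).trans
      (Nat.le_of_dvd (Nat.pos_of_ne_zero hn0) hun)
    have hp_gt : (n : ℤ) < (p : ℤ) := by
      rw [h, hsn]; nlinarith [sq_nonneg r, (by exact_mod_cast hn1 : (1 : ℤ) ≤ (n : ℤ))]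
    have : q < p := lt_of_le_of_lt hq_le (by exact_mod_cast hp_gt)
    omega
  -- main computation
  have hsplit : jacobiSym (n : ℤ) p = jacobiSym (u : ℤ) p := by
    rw [← hfact]
    push_cast
    rw [jacobiSym.mul_left, jacobiSym.pow_left, h2, one_pow, one_mul]
  rw [hsplit]
  have hrec : jacobiSym (u : ℤ) p = jacobiSym (p : ℤ) u :=
    jacobiSym.quadratic_reciprocity_one_mod_four' huodd hp4
  rw [hrec]
  have hmod : ((p : ℤ)) % (u : ℤ) = (r ^ 2) % (u : ℤ) := by
    have : (u : ℤ) ∣ (r ^ 2) - (p : ℤ) := by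
      rw [h]
      have : (r ^ 2 : ℤ) - (r ^ 2 + 2 * s ^ 2) = -(2 * s ^ 2) := by ring
      rw [this]
      exact ((dvd_pow hudvd two_ne_zero).mul_left 2).neg_right
    exact Int.modEq_iff_dvd.mpr this
  rw [jacobiSym.mod_left' hmod]
  exact jacobiSym.sq_one' hcop
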